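/- Let S₁, …, S_m be subspaces of Hermitian operators, each containing the identity, and let n = dim(S₁ ⊗ ⋯ ⊗ S_m). If Q is (S₁;…;S_m)-separable, then (n+1)·‖Q‖·I − Q is also (S₁;…;S_m)-separable. -/

import Mathlib

open Matrix
open scoped ComplexOrder

variable {m : ℕ} {d : Fin m → ℕ}

/-- The elementary tensor product of matrices `P i`, as a matrix on the product space. -/
def prodMat (P : ∀ i, Matrix (Fin (d i)) (Fin (d i)) ℂ) :
    Matrix (∀ i, Fin (d i)) (∀ i, Fin (d i)) ℂ :=
  Matrix.of fun p q => ∏ i, P i (p i) (q i)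

/-- The subspace `S₁ ⊗ ⋯ ⊗ S_m`, i.e. the real span of elementary tensor products of
elements of the subspaces `S i`. -/
noncomputable def tensorSpan (S : ∀ i, Submodule ℝ (Matrix (Fin (d i)) (Fin (d i)) ℂ)) :
    Submodule ℝ (Matrix (∀ i, Fin (d i)) (∀ i, Fin (d i)) ℂ) :=
  Submodule.span ℝ {X | ∃ P : ∀ i, Matrix (Fin (d i)) (Fin (d i)) ℂ,
    (∀ i, P i ∈ S i) ∧ X = prodMat P}

/-- `(S₁;…;S_m)`-separability: a finite sum of elementary tensor products of positive
semidefinite elements of the subspaces `S i`. -/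
def IsSep (S : ∀ i, Submodule ℝ (Matrix (Fin (d i)) (Fin (d i)) ℂ))
    (X : Matrix (∀ i, Fin (d i)) (∀ i, Fin (d i)) ℂ) : Prop :=
  ∃ (k : ℕ) (P : Fin k → ∀ i, Matrix (Fin (d i)) (Fin (d i)) ℂ),
    (∀ j i, P j i ∈ S i ∧ (P j i).PosSemidef) ∧ X = ∑ j, prodMat (P j)

/-- The operator (spectral) norm of a complex matrix. -/
noncomputable def opNorm {n : Type*} [Fintype n] [DecidableEq n] (A : Matrix n n ℂ) : ℝ :=
  ‖Matrix.toEuclideanCLM (𝕜 := ℂ) A‖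

/-- The Frobenius norm of a complex matrix. -/
noncomputable def frobNorm {n : Type*} [Fintype n] (A : Matrix n n ℂ) : ℝ :=
  Real.sqrt (∑ p, ∑ q, ‖A p q‖ ^ 2)


lemma prodMat_apply (P : ∀ i, Matrix (Fin (d i)) (Fin (d i)) ℂ) (p q) :
    prodMat P p q = ∏ i, P i (p i) (q i) := rfl

lemma prodMat_mul (A B : ∀ i, Matrix (Fin (d i)) (Fin (d i)) ℂ) :
    prodMat A * prodMat B = prodMat (fun i => A i * B i) := by
  ext p q
  simp only [Matrix.mul_apply, prodMat_apply]
  rw [Finset.prod_univ_sum]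
  rw [← Fintype.piFinset_univ]
  exact Finset.sum_congr rfl fun r _ => (Finset.prod_mul_distrib).symm

lemma prodMat_conjTranspose (A : ∀ i, Matrix (Fin (d i)) (Fin (d i)) ℂ) :
    (prodMat A)ᴴ = prodMat (fun i => (A i)ᴴ) := by
  ext p q
  simp only [Matrix.conjTranspose_apply, prodMat_apply, star_prod]

lemma prodMat_one : prodMat (fun i => (1 : Matrix (Fin (d i)) (Fin (d i)) ℂ)) = 1 := by
  ext p q
  simp only [prodMat_apply, Matrix.one_apply, Finset.prod_boole]
  simp [funext_iff]

lemma prodMat_posSemidef {P : ∀ i, Matrix (Fin (d i)) (Fin (d i)) ℂ}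
    (h : ∀ i, (P i).PosSemidef) : (prodMat P).PosSemidef := by
  have h' : ∀ i, ∃ B : Matrix (Fin (d i)) (Fin (d i)) ℂ, P i = Bᴴ * B := fun i =>
    by open scoped MatrixOrder Matrix.Norms.L2Operator in
      exact CStarAlgebra.nonneg_iff_eq_star_mul_self.mp (h i).nonneg
  choose B hB using h'
  suffices hPB : prodMat P = (prodMat B)ᴴ * prodMat B by
    rw [hPB]; exact Matrix.posSemidef_conjTranspose_mul_self _
  rw [prodMat_conjTranspose, prodMat_mul]
  exact congrArg prodMat (funext fun i => hB i)

lemma prodMat_sub_single (A B : ∀ i, Matrix (Fin (d i)) (Fin (d i)) ℂ) (k : Fin m)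
    (h : ∀ i, i ≠ k → A i = B i) :
    prodMat A - prodMat B = prodMat (Function.update A k (A k - B k)) := by
  ext p q
  simp only [Matrix.sub_apply, prodMat_apply]
  rw [← Finset.mul_prod_erase _ _ (Finset.mem_univ k),
      ← Finset.mul_prod_erase _ (fun i => B i (p i) (q i)) (Finset.mem_univ k),
      ← Finset.mul_prod_erase _ _ (Finset.mem_univ k)]
  have he : ∀ i ∈ Finset.univ.erase k, B i (p i) (q i) = A i (p i) (q i) := by
    intro i hi; rw [h i (Finset.ne_of_mem_erase hi)]
  have he2 : ∀ i ∈ Finset.univ.erase k,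
      (Function.update A k (A k - B k)) i (p i) (q i) = A i (p i) (q i) := by
    intro i hi; rw [Function.update_of_ne (Finset.ne_of_mem_erase hi)]
  rw [Finset.prod_congr rfl he, Finset.prod_congr rfl he2, Function.update_self]
  simp only [Matrix.sub_apply]
  ring

lemma prodMat_update_smul (P : ∀ i, Matrix (Fin (d i)) (Fin (d i)) ℂ) (k : Fin m) (c : ℝ) :
    prodMat (Function.update P k (c • P k)) = c • prodMat P := by
  ext p q
  simp only [prodMat_apply, Matrix.smul_apply]
  rw [← Finset.mul_prod_erase _ _ (Finset.mem_univ k),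
      ← Finset.mul_prod_erase _ (fun i => P i (p i) (q i)) (Finset.mem_univ k)]
  have he : ∀ i ∈ Finset.univ.erase k,
      (Function.update P k (c • P k)) i (p i) (q i) = P i (p i) (q i) := by
    intro i hi; rw [Function.update_of_ne (Finset.ne_of_mem_erase hi)]
  rw [Finset.prod_congr rfl he, Function.update_self]
  simp only [Matrix.smul_apply, Complex.real_smul]
  ring

lemma posSemidef_real_smul {n' : Type*} [Fintype n'] {A : Matrix n' n' ℂ} (hA : A.PosSemidef)
    {c : ℝ} (hc : 0 ≤ c) : (c • A).PosSemidef := by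
  rw [Matrix.posSemidef_iff_dotProduct_mulVec]
  constructor
  · show (c • A)ᴴ = c • A
    rw [Matrix.conjTranspose_smul, star_trivial, hA.1]
  · intro x
    rw [Matrix.smul_mulVec, dotProduct_smul, Complex.real_smul]
    exact mul_nonneg (by exact_mod_cast hc) (hA.dotProduct_mulVec_nonneg x)

lemma smul_one_sub_posSemidef {D : ℕ} {A : Matrix (Fin D) (Fin D) ℂ} (hA : A.IsHermitian)
    {a : ℝ} (ha : ∀ j, hA.eigenvalues j ≤ a) :
    (a • (1 : Matrix (Fin D) (Fin D) ℂ) - A).PosSemidef := by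
  have hU := (Matrix.mem_unitaryGroup_iff).mp (hA.eigenvectorUnitary).2
  have h1 : a • (1 : Matrix (Fin D) (Fin D) ℂ)
      = (hA.eigenvectorUnitary : Matrix (Fin D) (Fin D) ℂ) *
        Matrix.diagonal (fun _ => (a : ℂ)) *
        (star (hA.eigenvectorUnitary : Matrix (Fin D) (Fin D) ℂ)) := by
    have hd : Matrix.diagonal (fun _ : Fin D => (a : ℂ)) = a • (1 : Matrix (Fin D) (Fin D) ℂ) := by
      ext i j
      by_cases h : i = j <;>
        simp [Matrix.diagonal_apply, Matrix.one_apply, h, Complex.real_smul]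
    rw [hd, Matrix.mul_smul, Matrix.mul_one, Matrix.smul_mul, hU]
  have key2 : a • (1 : Matrix (Fin D) (Fin D) ℂ) - A
      = (hA.eigenvectorUnitary : Matrix (Fin D) (Fin D) ℂ) *
          (Matrix.diagonal (fun _ : Fin D => (a:ℂ))
            - Matrix.diagonal (RCLike.ofReal ∘ hA.eigenvalues)) *
          (star (hA.eigenvectorUnitary : Matrix (Fin D) (Fin D) ℂ)) := by
    rw [Matrix.mul_sub, Matrix.sub_mul]
    have hs := hA.spectral_theorem
    rw [Unitary.conjStarAlgAut_apply] at hs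
    conv_rhs => rw [← h1, ← hs]
  rw [key2, Matrix.diagonal_sub, Matrix.star_eq_conjTranspose]
  refine (Matrix.posSemidef_diagonal_iff.mpr fun j => ?_).mul_mul_conjTranspose_same _
  have he : (a:ℂ) - (RCLike.ofReal ∘ hA.eigenvalues) j = ((a - hA.eigenvalues j : ℝ) : ℂ) := by
    simp
  rw [he, Complex.zero_le_real]
  exact sub_nonneg.mpr (ha j)


lemma exists_top_eigen {D : ℕ} (hD : 0 < D) {A : Matrix (Fin D) (Fin D) ℂ} (hA : A.PosSemidef) :
    ∃ (t : ℝ) (v : Fin D → ℂ), 0 ≤ t ∧ (t • (1 : Matrix (Fin D) (Fin D) ℂ) - A).PosSemidef ∧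
      A *ᵥ v = (t : ℂ) • v ∧ star v ⬝ᵥ v = 1 := by
  haveI : Nonempty (Fin D) := ⟨⟨0, hD⟩⟩
  obtain ⟨j₀, -, hj₀⟩ := Finset.exists_max_image Finset.univ hA.1.eigenvalues Finset.univ_nonempty
  refine ⟨hA.1.eigenvalues j₀, ⇑(hA.1.eigenvectorBasis j₀), hA.eigenvalues_nonneg j₀,
    smul_one_sub_posSemidef hA.1 (fun j => hj₀ j (Finset.mem_univ j)), ?_, ?_⟩
  · rw [hA.1.mulVec_eigenvectorBasis j₀]
    funext x
    simp [Complex.real_smul]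
  · have h2 : (inner ℂ (hA.1.eigenvectorBasis j₀) (hA.1.eigenvectorBasis j₀) : ℂ) = 1 := by
      rw [inner_self_eq_norm_sq_to_K, hA.1.eigenvectorBasis.orthonormal.1 j₀]
      norm_num
    rw [← h2, EuclideanSpace.inner_eq_star_dotProduct, dotProduct_comm]

lemma prodVec_dot (v u : ∀ i, Fin (d i) → ℂ) :
    star (fun p : ∀ i, Fin (d i) => ∏ i, v i (p i)) ⬝ᵥ (fun p => ∏ i, u i (p i))
      = ∏ i, (star (v i) ⬝ᵥ u i) := by
  simp only [dotProduct, Pi.star_apply, star_prod]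
  calc ∑ p : ∀ i, Fin (d i), (∏ i, star (v i (p i))) * ∏ i, u i (p i)
      = ∑ p : ∀ i, Fin (d i), ∏ i, (star (v i (p i)) * u i (p i)) := by
        refine Finset.sum_congr rfl fun p _ => ?_
        rw [Finset.prod_mul_distrib]
    _ = ∏ i, ∑ x, star (v i x) * u i x := by
        symm
        rw [Finset.prod_univ_sum, Fintype.piFinset_univ]

lemma prodMat_mulVec (P : ∀ i, Matrix (Fin (d i)) (Fin (d i)) ℂ) (v : ∀ i, Fin (d i) → ℂ) :
    prodMat P *ᵥ (fun p => ∏ i, v i (p i)) = fun p => ∏ i, (P i *ᵥ v i) (p i) := by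
  funext p
  simp only [Matrix.mulVec, dotProduct, prodMat_apply]
  calc ∑ q : ∀ i, Fin (d i), (∏ i, P i (p i) (q i)) * ∏ i, v i (q i)
      = ∑ q : ∀ i, Fin (d i), ∏ i, (P i (p i) (q i) * v i (q i)) := by
        refine Finset.sum_congr rfl fun q _ => ?_
        rw [Finset.prod_mul_distrib]
    _ = ∏ i, ∑ x, P i (p i) x * v i x := by
        symm
        rw [Finset.prod_univ_sum, Fintype.piFinset_univ]

lemma re_dot_le_opNorm {ι : Type*} [Fintype ι] [DecidableEq ι] (A : Matrix ι ι ℂ) (w : ι → ℂ)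
    (hw : star w ⬝ᵥ w = 1) : (star w ⬝ᵥ (A *ᵥ w)).re ≤ opNorm A := by
  set x : EuclideanSpace ℂ ι := (WithLp.equiv 2 (ι → ℂ)).symm w with hxdef
  have h2 : (inner ℂ x x : ℂ) = 1 := by
    rw [hxdef, WithLp.equiv_symm_apply, EuclideanSpace.inner_toLp_toLp, dotProduct_comm]; exact hw
  have hx : ‖x‖ = 1 := by
    have h4 : ‖x‖^2 = 1 := by
      rw [← inner_self_eq_norm_sq (𝕜 := ℂ) x, h2]
      simp
    nlinarith [norm_nonneg x]
  have h5 : star w ⬝ᵥ (A *ᵥ w) = (inner ℂ x ((Matrix.toEuclideanCLM (𝕜 := ℂ) A) x) : ℂ) := by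
    rw [hxdef, WithLp.equiv_symm_apply, Matrix.toEuclideanCLM_toLp, EuclideanSpace.inner_toLp_toLp,
      dotProduct_comm]
  rw [h5]
  calc (inner ℂ x ((Matrix.toEuclideanCLM (𝕜 := ℂ) A) x) : ℂ).re
      ≤ ‖(inner ℂ x ((Matrix.toEuclideanCLM (𝕜 := ℂ) A) x) : ℂ)‖ := Complex.re_le_norm _
    _ ≤ ‖x‖ * ‖(Matrix.toEuclideanCLM (𝕜 := ℂ) A) x‖ := norm_inner_le_norm _ _
    _ ≤ ‖x‖ * (‖Matrix.toEuclideanCLM (𝕜 := ℂ) A‖ * ‖x‖) := by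
        gcongr
        exact (Matrix.toEuclideanCLM (𝕜 := ℂ) A).le_opNorm x
    _ = opNorm A := by rw [hx, one_mul, mul_one]; rfl

lemma cone_caratheodory {V : Type*} [AddCommGroup V] [Module ℝ V]
    (W : Submodule ℝ V) [FiniteDimensional ℝ W] (C : Set V)
    (hCW : ∀ x ∈ C, x ∈ W) (hCs : ∀ x ∈ C, ∀ c : ℝ, 0 ≤ c → c • x ∈ C) :
    ∀ (k : ℕ) (T : Fin k → V), (∀ j, T j ∈ C) →
      ∃ (k' : ℕ) (T' : Fin k' → V), k' ≤ Module.finrank ℝ W ∧ (∀ j, T' j ∈ C) ∧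
        ∑ j, T' j = ∑ j, T j := by
  intro k
  induction k using Nat.strong_induction_on with
  | _ k IH =>
    intro T hT
    by_cases hk : k ≤ Module.finrank ℝ W
    · exact ⟨k, T, hk, hT, rfl⟩
    push_neg at hk
    have hdep : ¬ LinearIndependent ℝ (fun j => (⟨T j, hCW _ (hT j)⟩ : W)) := by
      intro h
      have := h.fintype_card_le_finrank
      simp only [Fintype.card_fin] at this
      omega
    obtain ⟨g₀, hg₀, j₁, hj₁⟩ := Fintype.not_linearIndependent_iff.mp hdep
    have hg₀' : ∑ j, g₀ j • T j = 0 := by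
      have h2 := congrArg (W.subtype) hg₀
      simpa using h2
    have hex : ∃ g : Fin k → ℝ, (∑ j, g j • T j = 0) ∧ ∃ j, 0 < g j := by
      rcases lt_trichotomy (g₀ j₁) 0 with h | h | h
      · refine ⟨-g₀, ?_, j₁, by simpa using h⟩
        simp only [Pi.neg_apply, neg_smul, Finset.sum_neg_distrib, hg₀', neg_zero]
      · exact absurd h hj₁
      · exact ⟨g₀, hg₀', j₁, h⟩
    obtain ⟨g, hsum, jp, hjp⟩ := hex
    obtain ⟨j₀, -, hj₀⟩ := Finset.exists_max_image Finset.univ g ⟨jp, Finset.mem_univ jp⟩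
    have hgj₀ : 0 < g j₀ := lt_of_lt_of_le hjp (hj₀ jp (Finset.mem_univ jp))
    obtain ⟨k'', rfl⟩ : ∃ k'', k = k'' + 1 := ⟨k - 1, by omega⟩
    set μ : Fin (k'' + 1) → ℝ := fun j => 1 - g j / g j₀ with hμ
    have hμ0 : ∀ j, 0 ≤ μ j := by
      intro j
      have : g j / g j₀ ≤ 1 := (div_le_one hgj₀).mpr (hj₀ j (Finset.mem_univ j))
      simp [hμ]; linarith
    have hμsum : ∑ j, μ j • T j = ∑ j, T j := by
      have : ∑ j, μ j • T j = ∑ j, T j - (g j₀)⁻¹ • ∑ j, g j • T j := by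
        rw [Finset.smul_sum, ← Finset.sum_sub_distrib]
        refine Finset.sum_congr rfl fun j _ => ?_
        rw [hμ]
        rw [sub_smul, one_smul, smul_smul]
        congr 2
        field_simp
      rw [this, hsum, smul_zero, sub_zero]
    have hμj₀ : μ j₀ = 0 := by
      simp [hμ, div_self (ne_of_gt hgj₀)]
    set U : Fin k'' → V := fun i => μ (j₀.succAbove i) • T (j₀.succAbove i) with hU
    have hUC : ∀ i, U i ∈ C := fun i => hCs _ (hT _) _ (hμ0 _)
    obtain ⟨k', T', h1, h2, h3⟩ := IH k'' (by omega) U hUC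
    refine ⟨k', T', h1, h2, ?_⟩
    rw [h3, hU]
    calc ∑ i : Fin k'', μ (j₀.succAbove i) • T (j₀.succAbove i)
        = ∑ j, μ j • T j := by
          rw [Fin.sum_univ_succAbove (fun j => μ j • T j) j₀, hμj₀, zero_smul, zero_add]
      _ = ∑ j, T j := hμsum


lemma isSep_zero (S : ∀ i, Submodule ℝ (Matrix (Fin (d i)) (Fin (d i)) ℂ)) : IsSep S 0 :=
  ⟨0, fun j => j.elim0, fun j => j.elim0, by simp⟩

lemma isSep_elem (S : ∀ i, Submodule ℝ (Matrix (Fin (d i)) (Fin (d i)) ℂ))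
    {P : ∀ i, Matrix (Fin (d i)) (Fin (d i)) ℂ}
    (h : ∀ i, P i ∈ S i ∧ (P i).PosSemidef) : IsSep S (prodMat P) :=
  ⟨1, fun _ => P, fun _ => h, by simp⟩

lemma IsSep.add {S : ∀ i, Submodule ℝ (Matrix (Fin (d i)) (Fin (d i)) ℂ)}
    {X Y : Matrix (∀ i, Fin (d i)) (∀ i, Fin (d i)) ℂ}
    (hX : IsSep S X) (hY : IsSep S Y) : IsSep S (X + Y) := by
  obtain ⟨k₁, P₁, h₁, rfl⟩ := hX
  obtain ⟨k₂, P₂, h₂, rfl⟩ := hY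
  refine ⟨k₁ + k₂, Fin.append P₁ P₂, ?_, ?_⟩
  · intro j
    refine Fin.addCases (fun j1 => ?_) (fun j2 => ?_) j
    · intro i; rw [Fin.append_left]; exact h₁ j1 i
    · intro i; rw [Fin.append_right]; exact h₂ j2 i
  · rw [Fin.sum_univ_add]
    congr 1
    · exact Finset.sum_congr rfl fun j _ => by rw [Fin.append_left]
    · exact Finset.sum_congr rfl fun j _ => by rw [Fin.append_right]

lemma isSep_finsetSum {S : ∀ i, Submodule ℝ (Matrix (Fin (d i)) (Fin (d i)) ℂ)}
    {α : Type*} (s : Finset α) (f : α → Matrix (∀ i, Fin (d i)) (∀ i, Fin (d i)) ℂ)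
    (h : ∀ a ∈ s, IsSep S (f a)) : IsSep S (∑ a ∈ s, f a) := by
  classical
  induction s using Finset.induction_on with
  | empty => simpa using isSep_zero S
  | insert a s' hni ih =>
    rw [Finset.sum_insert hni]
    exact (h a (Finset.mem_insert_self a s')).add
      (ih fun b hb => h b (Finset.mem_insert_of_mem hb))

lemma prodMat_smul_family (c : Fin m → ℝ) (M : ∀ i, Matrix (Fin (d i)) (Fin (d i)) ℂ) :
    prodMat (fun i => c i • M i) = (∏ i, c i) • prodMat M := by
  ext p q
  simp only [prodMat_apply, Matrix.smul_apply, Complex.real_smul]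
  rw [Finset.prod_mul_distrib]
  push_cast
  ring

lemma key_term (hd : ∀ i, 0 < d i)
    (S : ∀ i, Submodule ℝ (Matrix (Fin (d i)) (Fin (d i)) ℂ))
    (hone : ∀ i, (1 : Matrix (Fin (d i)) (Fin (d i)) ℂ) ∈ S i)
    {P : ∀ i, Matrix (Fin (d i)) (Fin (d i)) ℂ}
    (hP : ∀ i, P i ∈ S i ∧ (P i).PosSemidef) :
    ∃ c : ℝ, 0 ≤ c ∧
      IsSep S (c • (1 : Matrix (∀ i, Fin (d i)) (∀ i, Fin (d i)) ℂ) - prodMat P) ∧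
      ∃ w : (∀ i, Fin (d i)) → ℂ, star w ⬝ᵥ w = 1 ∧
        star w ⬝ᵥ (prodMat P *ᵥ w) = (c : ℂ) := by
  have h' : ∀ i, ∃ (t : ℝ) (v : Fin (d i) → ℂ), 0 ≤ t ∧
      (t • (1 : Matrix (Fin (d i)) (Fin (d i)) ℂ) - P i).PosSemidef ∧
      P i *ᵥ v = (t : ℂ) • v ∧ star v ⬝ᵥ v = 1 := fun i => exists_top_eigen (hd i) (hP i).2
  choose t v ht0 htP hv hv1 using h'
  refine ⟨∏ i, t i, Finset.prod_nonneg fun i _ => ht0 i, ?_, ?_⟩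
  · -- separability of (∏ t) • 1 - prodMat P, by telescoping
    set F : ℕ → Matrix (∀ i, Fin (d i)) (∀ i, Fin (d i)) ℂ :=
      fun s => prodMat (fun i => if (i : ℕ) < s then P i else t i • 1) with hF
    have hF0 : F 0 = (∏ i, t i) • 1 := by
      have he : (fun i : Fin m => if (i:ℕ) < 0 then P i
          else t i • (1 : Matrix (Fin (d i)) (Fin (d i)) ℂ)) = fun i => t i • 1 := by
        funext i; simp
      simp only [hF]
      rw [he, prodMat_smul_family, prodMat_one]
    have hFm : F m = prodMat P := by
      have he : (fun i : Fin m => if (i:ℕ) < m then P i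
          else t i • (1 : Matrix (Fin (d i)) (Fin (d i)) ℂ)) = P := by
        funext i; simp [i.isLt]
      simp only [hF]
      rw [he]
    have htel : (∏ i, t i) • (1 : Matrix (∀ i, Fin (d i)) (∀ i, Fin (d i)) ℂ) - prodMat P
        = ∑ s ∈ Finset.range m, (F s - F (s+1)) := by
      rw [Finset.sum_range_sub' F, hF0, hFm]
    rw [htel]
    refine isSep_finsetSum _ _ fun s hs => ?_
    have hsm : s < m := Finset.mem_range.mp hs
    have hstep : F s - F (s+1) = prodMat (Function.update
        (fun i : Fin m => if (i:ℕ) < s then P i else t i • 1) (⟨s, hsm⟩ : Fin m)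
        ((fun i : Fin m => if (i:ℕ) < s then P i else t i • 1) (⟨s, hsm⟩ : Fin m)
          - (fun i : Fin m => if (i:ℕ) < s+1 then P i else t i • 1) (⟨s, hsm⟩ : Fin m))) := by
      rw [hF]
      apply prodMat_sub_single
      intro i hik
      have hne : (i:ℕ) ≠ s := fun h => hik (Fin.ext h)
      by_cases h2 : (i:ℕ) < s
      · simp [h2, Nat.lt_succ_of_lt h2]
      · have h3 : ¬ (i:ℕ) < s + 1 := by omega
        simp [h2, h3]
    rw [hstep]
    apply isSep_elem
    intro i
    rcases eq_or_ne i (⟨s, hsm⟩ : Fin m) with rfl | hik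
    · rw [Function.update_self]
      have h1 : ¬ (((⟨s, hsm⟩ : Fin m) : ℕ) < s) := Nat.lt_irrefl s
      have h2 : (((⟨s, hsm⟩ : Fin m) : ℕ)) < s + 1 := Nat.lt_succ_self s
      simp only [if_neg h1, if_pos h2]
      constructor
      · exact Submodule.sub_mem _ (Submodule.smul_mem _ _ (hone _)) (hP _).1
      · exact htP _
    · rw [Function.update_of_ne hik]
      by_cases h2 : (i:ℕ) < s
      · simp only [if_pos h2]
        exact hP i
      · simp only [if_neg h2]
        exact ⟨Submodule.smul_mem _ _ (hone i),
          posSemidef_real_smul Matrix.PosSemidef.one (ht0 i)⟩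
  · -- the witness vector
    refine ⟨fun p => ∏ i, v i (p i), ?_, ?_⟩
    · rw [prodVec_dot]
      simp [hv1]
    · rw [prodMat_mulVec]
      have he : (fun p : ∀ i, Fin (d i) => ∏ i, (P i *ᵥ v i) (p i))
          = fun p => ∏ i, (((t i : ℂ)) • v i) (p i) := by
        funext p
        exact Finset.prod_congr rfl fun i _ => by rw [hv i]
      rw [he, prodVec_dot]
      push_cast
      refine Finset.prod_congr rfl fun i _ => ?_
      rw [dotProduct_smul, hv1 i]
      simp

lemma posSemidef_sum {ι n' : Type*} [Fintype n'] (s : Finset ι) (f : ι → Matrix n' n' ℂ)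
    (h : ∀ a ∈ s, (f a).PosSemidef) : (∑ a ∈ s, f a).PosSemidef :=
  Finset.sum_induction f _ (fun _ _ ha hb => ha.add hb) Matrix.PosSemidef.zero h

lemma isSep_smul_one (hm : 0 < m) (S : ∀ i, Submodule ℝ (Matrix (Fin (d i)) (Fin (d i)) ℂ))
    (hone : ∀ i, (1 : Matrix (Fin (d i)) (Fin (d i)) ℂ) ∈ S i) {c : ℝ} (hc : 0 ≤ c) :
    IsSep S (c • (1 : Matrix (∀ i, Fin (d i)) (∀ i, Fin (d i)) ℂ)) := by
  have i0 : Fin m := ⟨0, hm⟩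
  have h1 : prodMat (Function.update (fun i => (1 : Matrix (Fin (d i)) (Fin (d i)) ℂ)) i0
      (c • (fun i => (1 : Matrix (Fin (d i)) (Fin (d i)) ℂ)) i0))
      = c • (1 : Matrix (∀ i, Fin (d i)) (∀ i, Fin (d i)) ℂ) := by
    rw [prodMat_update_smul, prodMat_one]
  rw [← h1]
  apply isSep_elem
  intro i
  rcases eq_or_ne i i0 with rfl | hi
  · rw [Function.update_self]
    exact ⟨Submodule.smul_mem _ _ (hone i),
      posSemidef_real_smul Matrix.PosSemidef.one hc⟩
  · rw [Function.update_of_ne hi]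
    exact ⟨hone i, Matrix.PosSemidef.one⟩


set_option synthInstance.maxHeartbeats 1000000 in
set_option maxHeartbeats 1000000 in
/-- If `Q` is `(S₁;…;S_m)`-separable then so is `(n+1)·‖Q‖·I − Q`, where
`n = dim(S₁ ⊗ ⋯ ⊗ S_m)`. -/
theorem smul_one_sub_isSep {m : ℕ} {d : Fin m → ℕ}
    (S : ∀ i, Submodule ℝ (Matrix (Fin (d i)) (Fin (d i)) ℂ))
    (hherm : ∀ i, ∀ A ∈ S i, A.IsHermitian)
    (hone : ∀ i, (1 : Matrix (Fin (d i)) (Fin (d i)) ℂ) ∈ S i)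
    (Q : Matrix (∀ i, Fin (d i)) (∀ i, Fin (d i)) ℂ) (hQ : IsSep S Q) :
    IsSep S (((Module.finrank ℝ (tensorSpan S) + 1 : ℝ) * opNorm Q) •
      (1 : Matrix (∀ i, Fin (d i)) (∀ i, Fin (d i)) ℂ) - Q) := by
  classical
  by_cases hdeg : ∃ i, d i = 0
  · -- degenerate: the index type is empty, all matrices are equal
    obtain ⟨i0, hi0⟩ := hdeg
    haveI : IsEmpty (∀ i, Fin (d i)) := ⟨fun p => by have := (p i0).isLt; omega⟩
    have htriv : ∀ A B : Matrix (∀ i, Fin (d i)) (∀ i, Fin (d i)) ℂ, A = B := fun A B => by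
      ext p q; exact isEmptyElim p
    exact ⟨0, fun j => j.elim0, fun j => j.elim0, htriv _ _⟩
  by_cases hm0 : m = 0
  · -- no factors: every elementary tensor is the identity
    subst hm0
    obtain ⟨k, P0, hP0, hQsum⟩ := hQ
    haveI : Unique (∀ i : Fin 0, Fin (d i)) := ⟨⟨fun i => i.elim0⟩, fun p => funext fun i => i.elim0⟩
    have hall : ∀ (P : ∀ i : Fin 0, Matrix (Fin (d i)) (Fin (d i)) ℂ),
        prodMat P = (1 : Matrix (∀ i : Fin 0, Fin (d i)) (∀ i : Fin 0, Fin (d i)) ℂ) := by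
      intro P
      ext p q
      have hpq : p = q := Subsingleton.elim p q
      subst hpq
      simp [prodMat_apply, Matrix.one_apply]
    have hQ1 : Q = (k : ℝ) • 1 := by
      rw [hQsum]
      have : ∀ j : Fin k, prodMat (P0 j) = 1 := fun j => hall (P0 j)
      rw [Finset.sum_congr rfl fun j _ => this j, Finset.sum_const, Finset.card_univ,
        Fintype.card_fin, ← Nat.cast_smul_eq_nsmul ℝ]
    have hop : opNorm Q = (k : ℝ) := by
      rw [hQ1]
      have h2 : ((k : ℝ) • (1 : Matrix (∀ i : Fin 0, Fin (d i)) (∀ i : Fin 0, Fin (d i)) ℂ))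
          = ((k : ℂ)) • 1 := by
        ext p q; simp [Matrix.smul_apply, Complex.real_smul]
      rw [h2]
      unfold opNorm
      rw [_root_.map_smul, _root_.map_one]
      haveI : Nontrivial (EuclideanSpace ℂ (∀ i : Fin 0, Fin (d i))) := by
        refine ⟨(WithLp.equiv 2 _).symm (fun _ => 1), 0, fun h => ?_⟩
        have h3 := congrFun (congrArg (WithLp.equiv 2 _) h) default
        simp at h3
      rw [norm_smul (k : ℂ) (1 : EuclideanSpace ℂ (∀ i : Fin 0, Fin (d i)) →L[ℂ]
          EuclideanSpace ℂ (∀ i : Fin 0, Fin (d i))),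
        ContinuousLinearMap.one_def, ContinuousLinearMap.norm_id]
      simp
    set n := Module.finrank ℝ (tensorSpan S) with hn
    refine ⟨n * k, fun _ => fun i => i.elim0, fun j i => i.elim0, ?_⟩
    have h4 : ∀ j : Fin (n * k), prodMat ((fun _ => fun i => i.elim0 :
        Fin (n*k) → ∀ i : Fin 0, Matrix (Fin (d i)) (Fin (d i)) ℂ) j) = 1 := fun j => hall _
    rw [Finset.sum_congr rfl fun j _ => h4 j, Finset.sum_const, Finset.card_univ,
      Fintype.card_fin, ← Nat.cast_smul_eq_nsmul ℝ, hop, hQ1, ← sub_smul]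
    congr 1
    push_cast
    ring
  -- main case
  have hm : 0 < m := Nat.pos_of_ne_zero hm0
  push_neg at hdeg
  have hd : ∀ i, 0 < d i := fun i => Nat.pos_of_ne_zero (hdeg i)
  obtain ⟨k, P0, hP0, hQsum⟩ := hQ
  set C : Set (Matrix (∀ i, Fin (d i)) (∀ i, Fin (d i)) ℂ) :=
    {X | ∃ P : ∀ i, Matrix (Fin (d i)) (Fin (d i)) ℂ,
      (∀ i, P i ∈ S i ∧ (P i).PosSemidef) ∧ X = prodMat P} with hC
  have hCW : ∀ x ∈ C, x ∈ tensorSpan S := by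
    rintro x ⟨P, hP, rfl⟩
    exact Submodule.subset_span ⟨P, fun i => (hP i).1, rfl⟩
  have i0 : Fin m := ⟨0, hm⟩
  have hCs : ∀ x ∈ C, ∀ c : ℝ, 0 ≤ c → c • x ∈ C := by
    rintro x ⟨P, hP, rfl⟩ c hc
    refine ⟨Function.update P i0 (c • P i0), ?_, (prodMat_update_smul P i0 c).symm⟩
    intro i
    rcases eq_or_ne i i0 with rfl | hi
    · rw [Function.update_self]
      exact ⟨Submodule.smul_mem _ _ (hP i).1, posSemidef_real_smul (hP i).2 hc⟩
    · rw [Function.update_of_ne hi]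
      exact hP i
  obtain ⟨k', T', hk', hT'C, hT'sum⟩ := cone_caratheodory (tensorSpan S) C hCW hCs k
    (fun j => prodMat (P0 j)) (fun j => ⟨P0 j, hP0 j, rfl⟩)
  have hQ' : Q = ∑ j, T' j := hQsum.trans hT'sum.symm
  have hsep_j : ∀ j : Fin k', IsSep S (opNorm Q • (1 : Matrix (∀ i, Fin (d i))
      (∀ i, Fin (d i)) ℂ) - T' j) := by
    intro j
    obtain ⟨P, hP, hTP⟩ := hT'C j
    obtain ⟨c, hc0, hcsep, w, hw1, hwP⟩ := key_term hd S hone hP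
    have hQT : (Q - T' j).PosSemidef := by
      have he : Q - T' j = ∑ j' ∈ Finset.univ.erase j, T' j' := by
        rw [hQ', ← Finset.add_sum_erase _ _ (Finset.mem_univ j)]
        abel
      rw [he]
      refine posSemidef_sum _ _ fun j' _ => ?_
      obtain ⟨P', hP', hTP'⟩ := hT'C j'
      rw [hTP']
      exact prodMat_posSemidef fun i => (hP' i).2
    have hle : c ≤ opNorm Q := by
      have h1 : (star w ⬝ᵥ (Q *ᵥ w)).re ≤ opNorm Q := re_dot_le_opNorm Q w hw1
      have h2 : 0 ≤ star w ⬝ᵥ ((Q - T' j) *ᵥ w) := hQT.dotProduct_mulVec_nonneg w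
      have h3 : star w ⬝ᵥ (Q *ᵥ w) = star w ⬝ᵥ ((Q - T' j) *ᵥ w) + (c : ℂ) := by
        rw [Matrix.sub_mulVec, dotProduct_sub, hTP, hwP]
        ring
      have h4 : 0 ≤ (star w ⬝ᵥ ((Q - T' j) *ᵥ w)).re := by
        have := (Complex.le_def.mp h2).1
        simpa using this
      have h5 : (star w ⬝ᵥ (Q *ᵥ w)).re = (star w ⬝ᵥ ((Q - T' j) *ᵥ w)).re + c := by
        rw [h3]
        simp
      linarith
    have hsplit : opNorm Q • (1 : Matrix (∀ i, Fin (d i)) (∀ i, Fin (d i)) ℂ) - T' j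
        = ((opNorm Q - c) • (1 : Matrix (∀ i, Fin (d i)) (∀ i, Fin (d i)) ℂ))
          + (c • (1 : Matrix (∀ i, Fin (d i)) (∀ i, Fin (d i)) ℂ) - T' j) := by
      rw [sub_smul]
      abel
    rw [hsplit]
    refine (isSep_smul_one hm S hone (by linarith)).add ?_
    rw [hTP]
    exact hcsep
  set n := Module.finrank ℝ (tensorSpan S) with hn
  have hfinal : ((n + 1 : ℝ) * opNorm Q) • (1 : Matrix (∀ i, Fin (d i)) (∀ i, Fin (d i)) ℂ) - Q
      = (∑ j : Fin k', (opNorm Q • (1 : Matrix (∀ i, Fin (d i)) (∀ i, Fin (d i)) ℂ) - T' j))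
        + (((n : ℝ) + 1 - k') * opNorm Q) • 1 := by
    rw [hQ', Finset.sum_sub_distrib, Finset.sum_const, Finset.card_univ, Fintype.card_fin,
      ← Nat.cast_smul_eq_nsmul ℝ]
    rw [smul_smul]
    rw [sub_add_eq_add_sub, ← add_smul]
    congr 2
    ring
  rw [hfinal]
  have hcoef : 0 ≤ ((n : ℝ) + 1 - k') * opNorm Q := by
    apply mul_nonneg
    · have : (k' : ℝ) ≤ (n : ℝ) := by exact_mod_cast hk'
      linarith
    · exact norm_nonneg _
  exact (isSep_finsetSum _ _ fun j _ => hsep_j j).add (isSep_smul_one hm S hone hcoef)
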